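/- Let F be any field, G any finite group, X a finite transitive G-set, and f a nonzero function in F^X, identified with the element f = Σ_{x∈X} f(x)·x of the permutation module F X. Then |supp(f)| · dim_F (F G · f) ≥ |X| + |supp(f)| − |X_{supp(f)}|, where supp(f) = {x ∈ X : f(x) ≠ 0}, F G · f is the F G-submodule of F X generated by f, and X_{supp(f)} is the block of X associated with supp(f). -/

import Mathlib

open Pointwise

theorem stmt9 {G X F : Type*} [Group G] [Fintype G] [MulAction G X] [Fintype X]
    [MulAction.IsPretransitive G X] [Field F]
    (f : X →₀ F) (hf : f ≠ 0) (x₀ : X) (hx₀ : f x₀ ≠ 0) :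
    let S : Set X := ↑f.support
    let 𝒮 : Set G := {α | α • x₀ ∈ S}
    let GS : Set G := {α | (fun β => β * α) '' 𝒮 = 𝒮}
    let XS : Set X := (fun α : G => α • x₀) '' GS
    f.support.card *
        Module.finrank F (Submodule.span F
          (Set.range fun α : G => (Representation.ofMulAction F G X α (MonoidAlgebra.ofCoeff f)).coeff)) +
      XS.ncard ≥ Fintype.card X + f.support.card := by
  classical
  intro S 𝒮 GS XS
  set ρ := fun (α : G) (g : X →₀ F) => (Representation.ofMulAction F G X α (MonoidAlgebra.ofCoeff g)).coeff with hρ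
  set T : Set (X →₀ F) := Set.range fun α : G => ρ α f with hT
  haveI : Module.Finite F (X →₀ F) :=
    Module.Finite.equiv (Finsupp.linearEquivFunOnFinite F F X).symm
  -- basic facts about translates
  have hτ : ∀ (α : G) (x : X), (ρ α f) x = f (α⁻¹ • x) := by
    intro α x
    simp [hρ, Representation.coeff_ofMulAction]
  have hsupp : ∀ α : G, (ρ α f).support = f.support.map (MulAction.toPerm α).toEmbedding := by
    intro α
    ext x
    simp only [Finsupp.mem_support_iff, hτ, Finset.mem_map, Equiv.coe_toEmbedding,
      MulAction.toPerm_apply]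
    constructor
    · intro h
      exact ⟨α⁻¹ • x, h, by simp⟩
    · rintro ⟨y, hy, rfl⟩
      simpa using hy
  have hsuppcard : ∀ α : G, (ρ α f).support.card = f.support.card := by
    intro α; rw [hsupp, Finset.card_map]
  -- extend {f} to a "basis" of the span consisting of translates
  have hfT : f ∈ T := ⟨1, by ext x; simp [hτ]⟩
  have hfli : LinearIndepOn F id ({f} : Set (X →₀ F)) :=
    LinearIndepOn.singleton hf
  set b : Set (X →₀ F) := hfli.extend (Set.singleton_subset_iff.mpr hfT) with hb
  have hbT : b ⊆ T := hfli.extend_subset _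
  have hfb : f ∈ b := hfli.subset_extend _ rfl
  have hbli : LinearIndependent F ((↑) : b → (X →₀ F)) := hfli.linearIndepOn_extend _
  have hspan : Submodule.span F b = Submodule.span F T := hfli.span_extend_eq_span _
  have hbfin : b.Finite := LinearIndependent.setFinite hbli
  haveI : Fintype b := hbfin.fintype
  have hd : Module.finrank F (Submodule.span F T) = b.toFinset.card := by
    rw [← hspan]; exact finrank_span_set_eq_card hbli
  set B : Finset (X →₀ F) := b.toFinset with hB
  have hfB : f ∈ B := by simpa [hB] using hfb
  have hmemT : ∀ α : G, ρ α f ∈ Submodule.span F b := by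
    intro α
    rw [hspan]
    exact Submodule.subset_span ⟨α, rfl⟩
  -- for every x there is a translate not vanishing at x
  have hex : ∀ x : X, ∃ α : G, (ρ α f) x ≠ 0 := by
    intro x
    obtain ⟨α, hα⟩ := MulAction.exists_smul_eq G x₀ x
    exact ⟨α, by rw [hτ, ← hα, inv_smul_smul]; exact hx₀⟩
  -- the "exceptional" set A
  set A : Finset X := Finset.univ.filter (fun x => ∀ g ∈ B, g ≠ f → g x = 0) with hA
  -- elements of A are in the support of f
  have hAf : ∀ x ∈ A, f x ≠ 0 := by
    intro x hx
    simp only [hA, Finset.mem_filter] at hx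
    intro hfx
    obtain ⟨α, hα⟩ := hex x
    have hall : ∀ g ∈ b, g x = 0 := by
      intro g hg
      by_cases hgf : g = f
      · rw [hgf]; exact hfx
      · exact hx.2 g (by simpa [hB] using hg) hgf
    have hz : ∀ v ∈ Submodule.span F b, v x = 0 := by
      intro v hv
      induction hv using Submodule.span_induction with
      | mem g hg => exact hall g hg
      | zero => simp
      | add u v _ _ hu hv => simp [Finsupp.add_apply, hu, hv]
      | smul c u _ hu => simp [Finsupp.smul_apply, hu]
    exact hα (hz _ (hmemT α))
  -- proportionality of evaluations at points of A
  have hprop : ∀ x ∈ A, ∀ y ∈ A, ∀ α : G, (ρ α f) y * f x = (ρ α f) x * f y := by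
    intro x hx y hy α
    simp only [hA, Finset.mem_filter] at hx hy
    have hz : ∀ v ∈ Submodule.span F b, v y * f x = v x * f y := by
      intro v hv
      induction hv using Submodule.span_induction with
      | mem g hg =>
        by_cases hgf : g = f
        · rw [hgf]; ring
        · rw [hx.2 g (by simpa [hB] using hg) hgf, hy.2 g (by simpa [hB] using hg) hgf]
          ring
      | zero => simp
      | add u v _ _ hu hv => simp only [Finsupp.add_apply]; linear_combination hu + hv
      | smul c u _ hu =>
          simp only [Finsupp.smul_apply, smul_eq_mul]; linear_combination c * hu
    exact hz _ (hmemT α)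
  -- A injects into XS
  have hcardA : A.card ≤ XS.ncard := by
    rcases A.eq_empty_or_nonempty with hAe | ⟨a, ha⟩
    · simp [hAe]
    · obtain ⟨β, hβ⟩ := MulAction.exists_smul_eq G a x₀
      have hsub : (fun y : X => β • y) '' (A : Set X) ⊆ XS := by
        rintro _ ⟨y, hy, rfl⟩
        have hfa := hAf a ha
        have hfy := hAf y hy
        -- key equivalence : ∀ γ, f (γ • (β • y)) ≠ 0 ↔ f (γ • x₀) ≠ 0
        have hkey : ∀ γ : G, (f (γ • (β • y)) ≠ 0 ↔ f (γ • x₀) ≠ 0) := by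
          intro γ
          have h1 := hprop a ha y hy (γ * β)⁻¹
          rw [hτ, hτ, inv_inv] at h1
          have h2 : f ((γ * β) • y) ≠ 0 ↔ f ((γ * β) • a) ≠ 0 := by
            constructor
            · intro h hc
              rw [hc, zero_mul] at h1
              exact mul_ne_zero h hfa h1
            · intro h hc
              rw [hc, zero_mul] at h1
              exact mul_ne_zero h hfy h1.symm
          rw [mul_smul, mul_smul] at h2
          rw [← hβ]
          exact h2
        obtain ⟨δ, hδ⟩ := MulAction.exists_smul_eq G x₀ (β • y)
        have hδGS : δ ∈ GS := by
          have hiff : ∀ γ : G, γ * δ ∈ 𝒮 ↔ γ ∈ 𝒮 := by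
            intro γ
            have := hkey γ
            rw [← hδ, ← mul_smul] at this
            simpa [𝒮, S, Finsupp.mem_support_iff] using this
          show (fun β => β * δ) '' 𝒮 = 𝒮
          ext z
          constructor
          · rintro ⟨γ, hγ, rfl⟩
            exact (hiff γ).mpr hγ
          · intro hz
            refine ⟨z * δ⁻¹, ?_, by group⟩
            have h := hiff (z * δ⁻¹)
            rw [inv_mul_cancel_right] at h
            exact h.mp hz
        exact ⟨δ, hδGS, hδ⟩
      calc A.card = ((fun y : X => β • y) '' (A : Set X)).ncard := by
            rw [Set.ncard_image_of_injective _ (MulAction.injective β), Set.ncard_coe_finset]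
        _ ≤ XS.ncard := Set.ncard_le_ncard hsub (Set.toFinite XS)
  -- covering : X is covered by supports of basis elements ≠ f together with A
  have hcover : (Finset.univ : Finset X) ⊆ (B.erase f).biUnion Finsupp.support ∪ A := by
    intro x _
    by_cases hxA : x ∈ A
    · exact Finset.mem_union_right _ hxA
    · simp only [hA, Finset.mem_filter, Finset.mem_univ, true_and, not_forall] at hxA
      obtain ⟨g, hgB, hgf, hgx⟩ := hxA
      refine Finset.mem_union_left _ (Finset.mem_biUnion.mpr ⟨g, Finset.mem_erase.mpr ⟨hgf, hgB⟩, ?_⟩)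
      simpa [Finsupp.mem_support_iff] using hgx
  have hcount : Fintype.card X ≤ (B.card - 1) * f.support.card + A.card := by
    calc Fintype.card X = (Finset.univ : Finset X).card := rfl
      _ ≤ ((B.erase f).biUnion Finsupp.support ∪ A).card := Finset.card_le_card hcover
      _ ≤ ((B.erase f).biUnion Finsupp.support).card + A.card := Finset.card_union_le _ _
      _ ≤ (∑ g ∈ B.erase f, g.support.card) + A.card := by
          gcongr; exact Finset.card_biUnion_le
      _ ≤ (∑ _g ∈ B.erase f, f.support.card) + A.card := by
          refine Nat.add_le_add_right (Finset.sum_le_sum ?_) _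
          intro g hg
          have hgb : g ∈ b := by
            have := (Finset.mem_erase.mp hg).2
            simpa [hB] using this
          obtain ⟨α, hα⟩ := hbT hgb
          have hα' : ρ α f = g := hα
          rw [← hα', hsuppcard]
      _ = (B.card - 1) * f.support.card + A.card := by
          rw [Finset.sum_const, Finset.card_erase_of_mem hfB, smul_eq_mul]
  -- final arithmetic
  change _ * Module.finrank F (Submodule.span F T) + _ ≥ _
  rw [hd]
  obtain ⟨k, hk⟩ : ∃ k, B.card = k + 1 :=
    ⟨B.card - 1, (Nat.succ_pred_eq_of_pos (Finset.card_pos.mpr ⟨f, hfB⟩)).symm⟩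
  have h2 : f.support.card * B.card = (B.card - 1) * f.support.card + f.support.card := by
    rw [hk, Nat.add_sub_cancel]; ring
  linarith
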